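/- Let (Q,·,D,R) be a constellation with pre-range. Define s∘t = s·t if R(s) = D(t), and undefined otherwise. Then (Q,∘,D,R) is a category if and only if Q satisfies the right congruence condition R(R(s)·t) = R(s·t) whenever s·t exists. -/

import Mathlib

namespace ConstellationsRange
open Classical

variable {Q : Type*}

/-- An (object-free) constellation: a partial binary operation `mul` (encoded via `Option`)
with a domain operation `D`, satisfying (Q1)-(Q3). -/
structure Constellation (Q : Type*) where
  mul : Q → Q → Option Q
  D : Q → Q
  /-- (Q1) if `x·(y·z)` exists then `(x·y)·z` exists and the two are equal. -/
  q1 : ∀ x y z yz w, mul y z = some yz → mul x yz = some w →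
      ∃ xy, mul x y = some xy ∧ mul xy z = some w
  /-- (Q2) if `x·y` and `y·z` exist then `x·(y·z)` exists. -/
  q2 : ∀ x y z xy yz, mul x y = some xy → mul y z = some yz → (mul x yz).isSome
  /-- `D x` is a right identity. -/
  q3_rid : ∀ x y z, mul y (D x) = some z → z = y
  /-- `D x · x = x`. -/
  q3_mul : ∀ x, mul (D x) x = some x
  /-- `D x` is the unique right identity `e` with `e·x = x`. -/
  q3_uniq : ∀ x e, (∀ y z, mul y e = some z → z = y) → mul e x = some x → e = D x

/-- The projections of a constellation are the elements of the form `D s`. -/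
def IsProj (C : Constellation Q) (e : Q) : Prop := ∃ s, C.D s = e

/-- A pre-range structure: `R s` is the unique smallest projection `e` (w.r.t. the
standard quasiorder `e ≤ f ↔ e·f exists`) such that `s·e` exists. -/
structure PreRange (C : Constellation Q) where
  R : Q → Q
  proj : ∀ s, IsProj C (R s)
  ex : ∀ s, (C.mul s (R s)).isSome
  min : ∀ s f, IsProj C f → (C.mul s f).isSome → (C.mul (R s) f).isSome
  uniq : ∀ s e, IsProj C e → (C.mul s e).isSome →
      (∀ f, IsProj C f → (C.mul s f).isSome → (C.mul e f).isSome) → e = R s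

/-- The natural (quasi)order on a constellation: `s ≤ t` iff `s = D(s)·t`. -/
def natle (C : Constellation Q) (s t : Q) : Prop := C.mul (C.D s) t = some s

/-- The derived partial operation `s∘t := s·t` when `R s = D t`, undefined otherwise. -/
noncomputable def catOf (C : Constellation Q) (R : Q → Q) : Q → Q → Option Q :=
  fun s t => if R s = C.D t then C.mul s t else none

/-- Identity of a partial binary operation. -/
def CatIdent (m : Q → Q → Option Q) (e : Q) : Prop :=
  (∀ y z, m y e = some z → z = y) ∧ (∀ y z, m e y = some z → z = y)

/-- The axioms (C1)-(C3) for an object-free category. -/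
def IsCategoryOp (m : Q → Q → Option Q) : Prop :=
  (∀ x y z, (m y z).bind (m x) = (m x y).bind (fun xy => m xy z)) ∧
  (∀ x y z xy yz, m x y = some xy → m y z = some yz → ((m y z).bind (m x)).isSome) ∧
  (∀ x, ∃ e f, CatIdent m e ∧ CatIdent m f ∧ (m e x).isSome ∧ (m x f).isSome)


section Aux

variable (C : Constellation Q) (PR : PreRange C)

lemma D_mul_D (x : Q) : C.mul (C.D x) (C.D x) = some (C.D x) := by
  obtain ⟨a, ha, _⟩ := C.q1 (C.D x) (C.D x) x x x (C.q3_mul x) (C.q3_mul x)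
  have h := C.q3_rid x (C.D x) a ha
  rw [h] at ha; exact ha

lemma D_D (x : Q) : C.D (C.D x) = C.D x :=
  (C.q3_uniq (C.D x) (C.D x) (fun y z h => C.q3_rid x y z h) (D_mul_D C x)).symm

lemma proj_D {e : Q} (h : IsProj C e) : C.D e = e := by
  obtain ⟨s, rfl⟩ := h; exact D_D C s

lemma proj_rid {e : Q} (h : IsProj C e) : ∀ y z, C.mul y e = some z → z = y := by
  obtain ⟨s, rfl⟩ := h; exact C.q3_rid s

lemma proj_mul_self {e : Q} (h : IsProj C e) : C.mul e e = some e := by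
  obtain ⟨s, rfl⟩ := h; exact D_mul_D C s

lemma D_mul {y z yz : Q} (h : C.mul y z = some yz) : C.D yz = C.D y := by
  have h1 : (C.mul (C.D y) yz).isSome := C.q2 (C.D y) y z y yz (C.q3_mul y) h
  obtain ⟨w, hw⟩ := Option.isSome_iff_exists.mp h1
  obtain ⟨a, ha, haw⟩ := C.q1 (C.D y) y z yz w h hw
  rw [C.q3_mul y] at ha
  rw [← Option.some_inj.mp ha] at haw
  rw [h] at haw
  rw [← Option.some_inj.mp haw] at hw
  exact (C.q3_uniq yz (C.D y) (fun a b hab => C.q3_rid y a b hab) hw).symm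

lemma R_proj {e : Q} (h : IsProj C e) : PR.R e = e :=
  (PR.uniq e e h (by rw [proj_mul_self C h]; rfl) (fun f _ hef => hef)).symm

lemma mul_R_self (s : Q) : C.mul s (PR.R s) = some s := by
  obtain ⟨z, hz⟩ := Option.isSome_iff_exists.mp (PR.ex s)
  rw [hz, proj_rid C (PR.proj s) s z hz]

lemma catOf_some {R' : Q → Q} {s t u : Q} :
    catOf C R' s t = some u ↔ R' s = C.D t ∧ C.mul s t = some u := by
  unfold catOf
  split <;> simp_all

lemma catIdent_proj {p : Q} (h : IsProj C p) : CatIdent (catOf C PR.R) p := by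
  constructor
  · intro y z hz
    exact proj_rid C h y z ((catOf_some C).mp hz).2
  · intro y z hz
    obtain ⟨h1, h2⟩ := (catOf_some C).mp hz
    rw [R_proj C PR h] at h1
    rw [h1, C.q3_mul y] at h2
    exact (Option.some_inj.mp h2).symm

end Aux

/-- for a constellation with pre-range, `s∘t := s·t` when `R s = D t`
(undefined otherwise) makes `(Q,∘,D,R)` a category iff the right congruence condition
`R(R(s)·t) = R(s·t)` holds whenever `s·t` exists. -/
theorem stmt3 (C : Constellation Q) (PR : PreRange C) :
    (IsCategoryOp (catOf C PR.R) ∧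
      (∀ x, catOf C PR.R (C.D x) x = some x) ∧
      (∀ x, catOf C PR.R x (PR.R x) = some x))
    ↔ (∀ s t u v, C.mul s t = some u → C.mul (PR.R s) t = some v →
        PR.R v = PR.R u) := by
  constructor
  · rintro ⟨⟨c1, _, _⟩, _, hR⟩ s t u v hst hRt
    set e := PR.R s with he
    have hproj : IsProj C e := PR.proj s
    have hee : C.mul e e = some e := proj_mul_self C hproj
    -- e·v = v
    obtain ⟨w, hw⟩ := Option.isSome_iff_exists.mp (C.q2 e e t e v hee hRt)
    obtain ⟨a, ha, haw⟩ := C.q1 e e t v w hRt hw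
    rw [hee] at ha
    rw [← Option.some_inj.mp ha] at haw
    rw [hRt] at haw
    rw [← Option.some_inj.mp haw] at hw
    -- D v = e
    have hDv : C.D v = e := (C.q3_uniq v e (proj_rid C hproj) hw).symm
    -- s·v = u
    obtain ⟨w2, hw2⟩ := Option.isSome_iff_exists.mp (C.q2 s e t s v (mul_R_self C PR s) hRt)
    obtain ⟨b, hb, hbw⟩ := C.q1 s e t v w2 hRt hw2
    rw [mul_R_self C PR s] at hb
    rw [← Option.some_inj.mp hb] at hbw
    rw [hst] at hbw
    rw [← Option.some_inj.mp hbw] at hw2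
    -- category composition
    have msv : catOf C PR.R s v = some u := (catOf_some C).mpr ⟨hDv.symm, hw2⟩
    have key := c1 s v (PR.R v)
    rw [hR v] at key
    simp only [Option.bind_some, msv] at key
    obtain ⟨h1, _⟩ := (catOf_some C).mp key.symm
    rw [proj_D C (PR.proj v)] at h1
    exact h1.symm
  · intro cong
    have mD : ∀ x, catOf C PR.R (C.D x) x = some x := fun x =>
      (catOf_some C).mpr ⟨R_proj C PR ⟨x, rfl⟩, C.q3_mul x⟩
    have mR : ∀ x, catOf C PR.R x (PR.R x) = some x := fun x =>
      (catOf_some C).mpr ⟨(proj_D C (PR.proj x)).symm, mul_R_self C PR x⟩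
    -- key: R(x·y) = R y when R x = D y
    have Rmul : ∀ x y xy, C.mul x y = some xy → PR.R x = C.D y → PR.R xy = PR.R y := by
      intro x y xy hxy hRD
      have h2 : C.mul (PR.R x) y = some y := by rw [hRD]; exact C.q3_mul y
      exact (cong x y xy y hxy h2).symm
    refine ⟨⟨?_, ?_, ?_⟩, mD, mR⟩
    · -- (C1)
      intro x y z
      have fwd : ∀ w, (catOf C PR.R y z).bind (catOf C PR.R x) = some w →
          (catOf C PR.R x y).bind (fun a => catOf C PR.R a z) = some w := by
        intro w hw
        obtain ⟨yz, hyz, hxyz⟩ := Option.bind_eq_some_iff.mp hw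
        obtain ⟨hRyz, hyz'⟩ := (catOf_some C).mp hyz
        obtain ⟨hRx, hxyz'⟩ := (catOf_some C).mp hxyz
        rw [D_mul C hyz'] at hRx
        obtain ⟨xy, hxy, hxyw⟩ := C.q1 x y z yz w hyz' hxyz'
        have h1 : catOf C PR.R x y = some xy := (catOf_some C).mpr ⟨hRx, hxy⟩
        have h2 : catOf C PR.R xy z = some w := by
          refine (catOf_some C).mpr ⟨?_, hxyw⟩
          rw [Rmul x y xy hxy hRx]; exact hRyz
        rw [h1, Option.bind_some, h2]
      have bwd : ∀ w, (catOf C PR.R x y).bind (fun a => catOf C PR.R a z) = some w →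
          (catOf C PR.R y z).bind (catOf C PR.R x) = some w := by
        intro w hw
        obtain ⟨xy, hxy, hxyz⟩ := Option.bind_eq_some_iff.mp hw
        obtain ⟨hRx, hxy'⟩ := (catOf_some C).mp hxy
        obtain ⟨hRxy, hxyz'⟩ := (catOf_some C).mp hxyz
        have hRy : PR.R y = C.D z := by rw [← Rmul x y xy hxy' hRx]; exact hRxy
        -- y·z exists
        have hyDz : C.mul y (C.D z) = some y := by rw [← hRy]; exact mul_R_self C PR y
        obtain ⟨yz, hyz⟩ := Option.isSome_iff_exists.mp
          (C.q2 y (C.D z) z y z hyDz (C.q3_mul z))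
        obtain ⟨w2, hw2⟩ := Option.isSome_iff_exists.mp (C.q2 x y z xy yz hxy' hyz)
        obtain ⟨a, ha, haw⟩ := C.q1 x y z yz w2 hyz hw2
        rw [hxy'] at ha
        rw [← Option.some_inj.mp ha] at haw
        rw [hxyz'] at haw
        rw [← Option.some_inj.mp haw] at hw2
        have h1 : catOf C PR.R y z = some yz := (catOf_some C).mpr ⟨hRy, hyz⟩
        have h2 : catOf C PR.R x yz = some w := by
          refine (catOf_some C).mpr ⟨?_, hw2⟩
          rw [D_mul C hyz]; exact hRx
        rw [h1, Option.bind_some, h2]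
      rcases hL : (catOf C PR.R y z).bind (catOf C PR.R x) with _ | w
      · rcases hRR : (catOf C PR.R x y).bind (fun a => catOf C PR.R a z) with _ | w
        · rfl
        · rw [← hL]; exact bwd w hRR
      · exact (fwd w hL).symm
    · -- (C2)
      intro x y z xy yz hxy hyz
      obtain ⟨hRx, hxy'⟩ := (catOf_some C).mp hxy
      obtain ⟨hRy, hyz'⟩ := (catOf_some C).mp hyz
      rw [hyz, Option.bind_some]
      obtain ⟨w, hw⟩ := Option.isSome_iff_exists.mp (C.q2 x y z xy yz hxy' hyz')
      have : catOf C PR.R x yz = some w := by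
        refine (catOf_some C).mpr ⟨?_, hw⟩
        rw [D_mul C hyz']; exact hRx
      rw [this]; rfl
    · -- (C3)
      intro x
      exact ⟨C.D x, PR.R x, catIdent_proj C PR ⟨x, rfl⟩, catIdent_proj C PR (PR.proj x),
        by rw [mD x]; rfl, by rw [mR x]; rfl⟩


end ConstellationsRange
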